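/- Let F be a field, n ≥ 1, d ≥ 1, let f ∈ F_{Ā,C̄}[X] be a polynomial of degree ≤ d, and let 1 ≤ d' ≤ d. Let Φ(f) ∈ C'_d(R) be the evaluation of f at (Z_1,…,Z_n) under the anticommutator product ⊙. Then the (1, d'+1, 1) entry of Φ(f) equals Σ_m c_m · ψ(m), where the sum runs over all monomials m of degree exactly d', c_m denotes the coefficient of m in f, and ψ(m) := Σ_ε Π_{t=1}^{d'} z_{σ_{m_ε}(t), t, l^{m_ε}_t}, the sum over all choices ε of a Boolean for each internal node of m. -/

import Mathlib

noncomputable section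

open scoped BigOperators

namespace NAPIT

/-- The list of (leaf label, leaf level) pairs of a nonassociative monomial (element of the
free magma), in left-to-right order, where the root of the monomial is at level `s`. -/
def leafData {n : ℕ} : FreeMagma (Fin n) → ℕ → List (Fin n × ℕ)
  | FreeMagma.of i, s => [(i, s)]
  | FreeMagma.mul x y, s => leafData x (s + 1) ++ leafData y (s + 1)

/-- The degree (number of leaves) of a nonassociative monomial. -/
def degM {n : ℕ} : FreeMagma (Fin n) → ℕ
  | FreeMagma.of _ => 1
  | FreeMagma.mul x y => degM x + degM y

/-- The depth of a nonassociative monomial (root at level 1; the depth is the maximal level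
of a leaf). -/
def depthM {n : ℕ} : FreeMagma (Fin n) → ℕ
  | FreeMagma.of _ => 1
  | FreeMagma.mul x y => max (depthM x) (depthM y) + 1

/-- Evaluation of a nonassociative monomial at `b : Fin n → A`, using `mul` as the product on
`A`; this is the unique magma homomorphism `FreeMagma (Fin n) → (A, mul)` with `x_i ↦ b i`. -/
def evalWith {n : ℕ} {A : Type*} (mul : A → A → A) (b : Fin n → A) : FreeMagma (Fin n) → A
  | FreeMagma.of i => b i
  | FreeMagma.mul x y => mul (evalWith mul b x) (evalWith mul b y)

/-- The multiset of all variants `m_ε` of a monomial `m`, where `ε` ranges over all choices of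
a Boolean for each internal node of `m`, and `m_ε` is obtained from `m` by swapping the two
children at exactly those internal nodes where `ε` is true (counted with multiplicity). -/
def variants {n : ℕ} : FreeMagma (Fin n) → Multiset (FreeMagma (Fin n))
  | FreeMagma.of i => {FreeMagma.of i}
  | FreeMagma.mul x y =>
      (variants x).bind fun x' => (variants y).bind fun y' =>
        {FreeMagma.mul x' y', FreeMagma.mul y' x'}

/-- The underlying module of the algebra `A'_d(R)`: arrays `x[i,j,k]` with
`i, j ∈ Fin (d+1)`, `k ∈ Fin d` (zero-based; the paper's indices are shifted by one). -/
def Arr (d : ℕ) (R : Type*) : Type _ := Fin (d + 1) → Fin (d + 1) → Fin d → R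

namespace Arr

variable {d : ℕ} {R : Type*}

instance instAddCommGroup [AddCommGroup R] : AddCommGroup (Arr d R) :=
  inferInstanceAs (AddCommGroup (Fin (d + 1) → Fin (d + 1) → Fin d → R))

instance instModule {S : Type*} [Semiring S] [AddCommGroup R] [Module S R] :
    Module S (Arr d R) :=
  inferInstanceAs (Module S (Fin (d + 1) → Fin (d + 1) → Fin d → R))

/-- The bilinear product `∘` of `A'_d(R)`:
`(x ∘ y)[i,j,k] = ∑_{l} x[i,l,k+1] * y[l,j,k+1]` if `k+1` is a legal third index, else `0`. -/
def aprod [CommRing R] (x y : Arr d R) : Arr d R := fun i j k =>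
  if h : (k : ℕ) + 1 < d then
    ∑ l : Fin (d + 1), x i l ⟨(k : ℕ) + 1, h⟩ * y l j ⟨(k : ℕ) + 1, h⟩
  else 0

instance instMul [CommRing R] : Mul (Arr d R) := ⟨aprod⟩

end Arr

/-- The algebra `C'_d(R)`: same underlying module as `A'_d(R)`, with the anticommutator
product `a ⊙ b = a ∘ b + b ∘ a`. -/
def CArr (d : ℕ) (R : Type*) : Type _ := Arr d R

namespace CArr

variable {d : ℕ} {R : Type*}

/-- The identity map `A'_d(R) → C'_d(R)` of underlying modules. -/
def ofArr (x : Arr d R) : CArr d R := x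

/-- The identity map `C'_d(R) → A'_d(R)` of underlying modules. -/
def toArr (x : CArr d R) : Arr d R := x

instance instAddCommGroup [AddCommGroup R] : AddCommGroup (CArr d R) :=
  inferInstanceAs (AddCommGroup (Arr d R))

instance instModule {S : Type*} [Semiring S] [AddCommGroup R] [Module S R] :
    Module S (CArr d R) :=
  inferInstanceAs (Module S (Arr d R))

instance instMul [CommRing R] : Mul (CArr d R) :=
  ⟨fun a b => ofArr (toArr a * toArr b + toArr b * toArr a)⟩

end CArr

/-- The element `Z_i ∈ A'_d(R)`, `R = MvPolynomial (Fin n × Fin d × Fin d) F`, whose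
`(j, j+1, k)` entry is the indeterminate `z_{i,j,k}` and whose other entries vanish. -/
def Z (F : Type*) [CommRing F] (n d : ℕ) (i : Fin n) :
    Arr d (MvPolynomial (Fin n × Fin d × Fin d) F) := fun j j' k =>
  if h : (j : ℕ) < d ∧ (j' : ℕ) = (j : ℕ) + 1 then
    MvPolynomial.X (i, ⟨(j : ℕ), h.1⟩, k)
  else 0

/-- The element `Z_i` regarded as an element of `C'_d(R)`. -/
def ZC (F : Type*) [CommRing F] (n d : ℕ) (i : Fin n) :
    CArr d (MvPolynomial (Fin n × Fin d × Fin d) F) := CArr.ofArr (Z F n d i)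

/-- The monomial `∏_{t=1}^{d'} z_{σ_m(t), (t-1) + k1, (l^m_t - 1) + k2}` associated to a
nonassociative monomial `m` of degree `d'` and offsets `k1, k2` (all indices zero-based; the
paper's 1-based offsets are `k1 + 1`, `k2 + 1`).  Indices which would fall out of range are
discarded (this never happens in the intended range of parameters). -/
def monProd (F : Type*) [CommRing F] {n : ℕ} (d : ℕ) (k1 k2 : ℕ) (m : FreeMagma (Fin n)) :
    MvPolynomial (Fin n × Fin d × Fin d) F :=
  (((leafData m 1).zipIdx.map Prod.swap).map fun p =>
    if h : p.1 + k1 < d ∧ p.2.2 - 1 + k2 < d then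
      MvPolynomial.X (p.2.1, ⟨p.1 + k1, h.1⟩, ⟨p.2.2 - 1 + k2, h.2⟩)
    else 0).prod

/-- `ψ(m) = ∑_ε ∏_{t=1}^{d'} z_{σ_{m_ε}(t), t, l^{m_ε}_t}` (1-based), the sum running over all
choices `ε` of a Boolean for each internal node of `m`. -/
def psi (F : Type*) [CommRing F] {n : ℕ} (d : ℕ) (m : FreeMagma (Fin n)) :
    MvPolynomial (Fin n × Fin d × Fin d) F :=
  ((variants m).map fun m' => monProd F d 0 0 m').sum

/-- The coefficient function of an element of the free nonunital nonassociative algebra. -/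
def coeffOf {F : Type*} [Semiring F] {n : ℕ}
    (f : FreeNonUnitalNonAssocAlgebra F (Fin n)) : FreeMagma (Fin n) →₀ F := f.coeff

/-- Evaluation of an element of the free nonunital nonassociative algebra on `x_1, …, x_n` at
the tuple `b`, with `mul` as the product of the target: the linear extension of
`m ↦ evalWith mul b m`, i.e. the unique nonunital `F`-algebra homomorphism sending
`x_i ↦ b i` into `(A, mul)`. -/
def evalNAWith {F : Type*} [Semiring F] {n : ℕ} {A : Type*}
    [AddCommMonoid A] [Module F A] (mul : A → A → A) (b : Fin n → A)
    (f : FreeNonUnitalNonAssocAlgebra F (Fin n)) : A :=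
  Finsupp.sum (coeffOf f) fun m c => c • evalWith mul b m

/-- Evaluation of an element of the free nonunital nonassociative algebra at a tuple `b` of
elements of a (not necessarily unital/associative) algebra `A`: the unique nonunital
`F`-algebra homomorphism sending `x_i ↦ b i`. -/
def evalNA {F : Type*} [Semiring F] {n : ℕ} {A : Type*}
    [AddCommMonoid A] [Mul A] [Module F A] (b : Fin n → A)
    (f : FreeNonUnitalNonAssocAlgebra F (Fin n)) : A :=
  evalNAWith (· * ·) b f

/-- Evaluation of an element of the unitization of the free nonunital nonassociative algebra
at a tuple `b` of elements of the unitization of `A`: the unique unital `F`-algebra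
homomorphism sending `x_i ↦ b i` (and the adjoined unit to the unit). -/
def evalUnit {F : Type*} [CommSemiring F] {n : ℕ} {A : Type*}
    [AddCommMonoid A] [Mul A] [Module F A] (b : Fin n → Unitization F A)
    (f : Unitization F (FreeNonUnitalNonAssocAlgebra F (Fin n))) : Unitization F A :=
  Unitization.inl f.fst + evalNA b f.snd

/-- The commutativity congruence on the free magma: the smallest equivalence relation with
`m₁ * m₂ ≈ m₂ * m₁` and compatible with the product. -/
inductive CommEq {n : ℕ} : FreeMagma (Fin n) → FreeMagma (Fin n) → Prop
  | refl (m : FreeMagma (Fin n)) : CommEq m m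
  | symm {a b : FreeMagma (Fin n)} : CommEq a b → CommEq b a
  | trans {a b c : FreeMagma (Fin n)} : CommEq a b → CommEq b c → CommEq a c
  | comm (a b : FreeMagma (Fin n)) : CommEq (a * b) (b * a)
  | mul_congr {a a' b b' : FreeMagma (Fin n)} :
      CommEq a a' → CommEq b b' → CommEq (a * b) (a' * b')

/-- The basis monomial `m` of the free nonunital nonassociative algebra. -/
def single1 (F : Type*) [Semiring F] {n : ℕ} (m : FreeMagma (Fin n)) :
    FreeNonUnitalNonAssocAlgebra F (Fin n) :=
  MonoidAlgebra.ofCoeff (Finsupp.single m 1 : FreeMagma (Fin n) →₀ F)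

/-- `I_comm`: the `F`-linear span of `{m − m' : m ≈ m'}` inside the free nonunital
nonassociative algebra. -/
def Icomm (F : Type*) [Field F] (n : ℕ) :
    Submodule F (FreeNonUnitalNonAssocAlgebra F (Fin n)) :=
  Submodule.span F
    {x | ∃ m m' : FreeMagma (Fin n), CommEq m m' ∧ x = single1 F m - single1 F m'}

section Aux

variable {F : Type*} [CommRing F] {n d : ℕ}

lemma degM_pos (m : FreeMagma (Fin n)) : 1 ≤ degM m := by
  induction m using FreeMagma.rec with
  | of i => exact le_refl 1
  | mul x y ihx ihy => simp only [degM]; omega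

lemma leafData_length (m : FreeMagma (Fin n)) (s : ℕ) :
    (leafData m s).length = degM m := by
  induction m using FreeMagma.rec generalizing s with
  | of i => rfl
  | mul x y ihx ihy => simp [leafData, degM, ihx, ihy]

lemma leafData_ne_nil (m : FreeMagma (Fin n)) (s : ℕ) : leafData m s ≠ [] := by
  intro h
  have h1 := leafData_length m s
  have h2 := degM_pos m
  rw [h] at h1
  simp at h1
  omega

lemma leafData_succ (m : FreeMagma (Fin n)) (s : ℕ) :
    leafData m (s + 1) = (leafData m s).map fun p => (p.1, p.2 + 1) := by
  induction m using FreeMagma.rec generalizing s with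
  | of i => rfl
  | mul x y ihx ihy => simp [leafData, ihx, ihy]

lemma leafData_level (m : FreeMagma (Fin n)) (s : ℕ) : ∀ p ∈ leafData m s, s ≤ p.2 := by
  induction m using FreeMagma.rec generalizing s with
  | of i =>
      intro p hp
      simp only [leafData, List.mem_singleton] at hp
      subst hp; exact le_refl s
  | mul x y ihx ihy =>
      intro p hp
      simp only [leafData, List.mem_append] at hp
      rcases hp with h | h
      · have := ihx (s + 1) p h; omega
      · have := ihy (s + 1) p h; omega

/-- The single factor `z_{i, a, b}` (or `0` if the indices are out of range). -/
def fct (F : Type*) [CommRing F] (n d : ℕ) (i : Fin n) (a b : ℕ) :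
    MvPolynomial (Fin n × Fin d × Fin d) F :=
  if h : a < d ∧ b < d then MvPolynomial.X (i, ⟨a, h.1⟩, ⟨b, h.2⟩) else 0

/-- Recursive form of the product of factors over a leaf-data list. -/
def prodL (F : Type*) [CommRing F] (n d : ℕ) (k2 : ℕ) :
    ℕ → List (Fin n × ℕ) → MvPolynomial (Fin n × Fin d × Fin d) F
  | _, [] => 1
  | k1, p :: L => fct F n d p.1 k1 (p.2 - 1 + k2) * prodL F n d k2 (k1 + 1) L

lemma enumFrom_prod (k2 : ℕ) (L : List (Fin n × ℕ)) :
    ∀ s k1 : ℕ, (((L.zipIdx s).map Prod.swap).map fun p => fct F n d p.2.1 (p.1 + k1) (p.2.2 - 1 + k2)).prod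
      = prodL F n d k2 (s + k1) L := by
  induction L with
  | nil => intro s k1; rfl
  | cons p L ih =>
      intro s k1
      simp only [List.zipIdx_cons, List.map_cons, Prod.swap_prod_mk, List.prod_cons, prodL, ih]
      rw [show s + 1 + k1 = s + k1 + 1 by omega]

lemma monProd_eq_prodL (k1 k2 : ℕ) (m : FreeMagma (Fin n)) :
    monProd F d k1 k2 m = prodL F n d k2 k1 (leafData m 1) := by
  have h := enumFrom_prod (F := F) (d := d) k2 (leafData m 1) 0 k1
  rw [Nat.zero_add] at h
  exact h

lemma prodL_append (k2 : ℕ) (A B : List (Fin n × ℕ)) : ∀ k1,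
    prodL F n d k2 k1 (A ++ B) = prodL F n d k2 k1 A * prodL F n d k2 (k1 + A.length) B := by
  induction A with
  | nil => intro k1; simp [prodL]
  | cons p A ih =>
      intro k1
      show fct F n d p.1 k1 (p.2 - 1 + k2) * prodL F n d k2 (k1 + 1) (A ++ B)
          = fct F n d p.1 k1 (p.2 - 1 + k2) * prodL F n d k2 (k1 + 1) A
            * prodL F n d k2 (k1 + (A.length + 1)) B
      rw [ih (k1 + 1), show k1 + (A.length + 1) = k1 + 1 + A.length from by omega, mul_assoc]

lemma prodL_map_succ (k2 : ℕ) (L : List (Fin n × ℕ)) (hL : ∀ p ∈ L, 1 ≤ p.2) : ∀ k1,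
    prodL F n d k2 k1 (L.map fun p => (p.1, p.2 + 1)) = prodL F n d (k2 + 1) k1 L := by
  induction L with
  | nil => intro k1; rfl
  | cons p L ih =>
      intro k1
      simp only [List.map_cons, prodL]
      rw [ih (fun q hq => hL q (List.mem_cons_of_mem _ hq)),
        show p.2 + 1 - 1 + k2 = p.2 - 1 + (k2 + 1) from by
          have := hL p List.mem_cons_self; omega]

lemma prodL_zero (k1 k2 : ℕ) (h : d ≤ k2) (L : List (Fin n × ℕ)) (hL : L ≠ []) :
    prodL F n d k2 k1 L = 0 := by
  cases L with
  | nil => exact absurd rfl hL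
  | cons p L =>
      have hf : fct F n d p.1 k1 (p.2 - 1 + k2) = 0 := by
        simp only [fct]
        rw [dif_neg (by omega : ¬(k1 < d ∧ p.2 - 1 + k2 < d))]
      show fct F n d p.1 k1 (p.2 - 1 + k2) * prodL F n d k2 (k1 + 1) L = 0
      rw [hf, zero_mul]

lemma monProd_zero (k1 k2 : ℕ) (h : d ≤ k2) (m : FreeMagma (Fin n)) :
    monProd F d k1 k2 m = 0 := by
  rw [monProd_eq_prodL]
  exact prodL_zero _ _ h _ (leafData_ne_nil m 1)

lemma monProd_mul (k1 k2 : ℕ) (x y : FreeMagma (Fin n)) :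
    monProd F d k1 k2 (FreeMagma.mul x y)
      = monProd F d k1 (k2 + 1) x * monProd F d (k1 + degM x) (k2 + 1) y := by
  rw [monProd_eq_prodL, monProd_eq_prodL, monProd_eq_prodL]
  rw [show leafData (FreeMagma.mul x y) 1 = leafData x (1 + 1) ++ leafData y (1 + 1) from rfl,
    prodL_append,
    show leafData x (1 + 1) = (leafData x 1).map (fun p => (p.1, p.2 + 1)) from
      leafData_succ x 1,
    show leafData y (1 + 1) = (leafData y 1).map (fun p => (p.1, p.2 + 1)) from
      leafData_succ y 1,
    List.length_map, leafData_length,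
    prodL_map_succ _ _ (leafData_level x 1), prodL_map_succ _ _ (leafData_level y 1)]

lemma degM_variants (m : FreeMagma (Fin n)) : ∀ m' ∈ variants m, degM m' = degM m := by
  induction m using FreeMagma.rec with
  | of i =>
      intro m' h
      simp only [variants, Multiset.mem_singleton] at h
      subst h; rfl
  | mul x y ihx ihy =>
      intro m' h
      simp only [variants, Multiset.mem_bind, Multiset.insert_eq_cons,
        Multiset.mem_cons, Multiset.mem_singleton] at h
      obtain ⟨x', hx', y', hy', hm⟩ := h
      have hx := ihx x' hx'
      have hy := ihy y' hy'
      rcases hm with hm | hm <;> subst hm <;>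
        simp only [degM] <;> omega

lemma S_zero (k1 k2 : ℕ) (h : d ≤ k2) (m : FreeMagma (Fin n)) :
    ((variants m).map (monProd F d k1 k2)).sum = 0 := by
  rw [Multiset.map_congr rfl (fun m' _ => monProd_zero k1 k2 h m')]
  simp

lemma S_mul (k1 k2 : ℕ) (x y : FreeMagma (Fin n)) :
    ((variants (FreeMagma.mul x y)).map (monProd F d k1 k2)).sum
      = ((variants x).map (monProd F d k1 (k2 + 1))).sum
          * ((variants y).map (monProd F d (k1 + degM x) (k2 + 1))).sum
        + ((variants y).map (monProd F d k1 (k2 + 1))).sum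
          * ((variants x).map (monProd F d (k1 + degM y) (k2 + 1))).sum := by
  have e1 : ∀ x' ∈ variants x,
      ((variants y).map fun y' =>
          monProd F d k1 k2 (FreeMagma.mul x' y') + monProd F d k1 k2 (FreeMagma.mul y' x')).sum
        = ((variants y).map fun y' =>
            monProd F d k1 (k2 + 1) x' * monProd F d (k1 + degM x) (k2 + 1) y'
              + monProd F d k1 (k2 + 1) y' * monProd F d (k1 + degM y) (k2 + 1) x').sum := by
    intro x' hx'
    refine congrArg Multiset.sum (Multiset.map_congr rfl fun y' hy' => ?_)
    rw [monProd_mul, monProd_mul, degM_variants x x' hx', degM_variants y y' hy']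
  calc ((variants (FreeMagma.mul x y)).map (monProd F d k1 k2)).sum
      = ((variants x).map fun x' =>
          ((variants y).map fun y' =>
            monProd F d k1 k2 (FreeMagma.mul x' y')
              + monProd F d k1 k2 (FreeMagma.mul y' x')).sum).sum := by
        show ((((variants x).bind fun x' => (variants y).bind fun y' =>
            ({FreeMagma.mul x' y', FreeMagma.mul y' x'} : Multiset _)).map
              (monProd F d k1 k2))).sum = _
        simp only [Multiset.map_bind, Multiset.sum_bind, Multiset.insert_eq_cons,
          Multiset.map_cons, Multiset.map_singleton, Multiset.sum_cons,
          Multiset.sum_singleton, add_zero]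
    _ = ((variants x).map fun x' =>
          monProd F d k1 (k2 + 1) x'
              * ((variants y).map (monProd F d (k1 + degM x) (k2 + 1))).sum
            + ((variants y).map (monProd F d k1 (k2 + 1))).sum
              * monProd F d (k1 + degM y) (k2 + 1) x').sum := by
        refine congrArg Multiset.sum (Multiset.map_congr rfl fun x' hx' => ?_)
        rw [e1 x' hx', Multiset.sum_map_add, Multiset.sum_map_mul_left,
          Multiset.sum_map_mul_right]
    _ = _ := by
        rw [Multiset.sum_map_add, Multiset.sum_map_mul_right, Multiset.sum_map_mul_left]

lemma sum_aux {R : Type*} [CommRing R] (c : ℕ) (u : R) (g : Fin (d + 1) → R) :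
    ∑ l : Fin (d + 1), (if (l : ℕ) = c then u else 0) * g l
      = if h : c ≤ d then u * g ⟨c, by omega⟩ else 0 := by
  by_cases h : c ≤ d
  · rw [dif_pos h, Finset.sum_eq_single (⟨c, by omega⟩ : Fin (d + 1))]
    · simp
    · intro l _ hl
      rw [if_neg, zero_mul]
      intro hc
      exact hl (Fin.ext hc)
    · simp
  · rw [dif_neg h, Finset.sum_eq_zero]
    intro l _
    have := l.isLt
    rw [if_neg (by omega : ¬((l : ℕ) = c)), zero_mul]

lemma CArr_mul_apply {R : Type*} [CommRing R] (a b : CArr d R) (i j : Fin (d + 1))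
    (k : Fin d) :
    (a * b) i j k = Arr.aprod (CArr.toArr a) (CArr.toArr b) i j k
      + Arr.aprod (CArr.toArr b) (CArr.toArr a) i j k := rfl

lemma eval_entry (m : FreeMagma (Fin n)) (i j : Fin (d + 1)) (k : Fin d) :
    evalWith (· * ·) (ZC F n d) m i j k
      = if (j : ℕ) = (i : ℕ) + degM m
          then ((variants m).map (monProd F d (i : ℕ) (k : ℕ))).sum else 0 := by
  induction m using FreeMagma.rec generalizing i j k with
  | of i0 =>
      show Z F n d i0 i j k = _
      simp only [variants, Multiset.map_singleton, Multiset.sum_singleton, degM]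
      rw [monProd_eq_prodL, show leafData (FreeMagma.of i0) 1 = [(i0, 1)] from rfl]
      have hp : prodL F n d (k : ℕ) (i : ℕ) [(i0, 1)] = fct F n d i0 (i : ℕ) (k : ℕ) := by
        show fct F n d i0 (i : ℕ) (1 - 1 + (k : ℕ)) * 1 = _
        rw [mul_one, show 1 - 1 + (k : ℕ) = (k : ℕ) from by omega]
      rw [hp]
      simp only [Z, fct]
      by_cases hj : (j : ℕ) = (i : ℕ) + 1
      · rw [if_pos hj]
        by_cases hi : (i : ℕ) < d
        · rw [dif_pos ⟨hi, hj⟩, dif_pos ⟨hi, k.isLt⟩]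
        · rw [dif_neg (by tauto), dif_neg (by tauto)]
      · rw [if_neg hj, dif_neg (by tauto)]
  | mul x y ihx ihy =>
      show (evalWith (· * ·) (ZC F n d) x * evalWith (· * ·) (ZC F n d) y : CArr d _) i j k = _
      rw [CArr_mul_apply]
      simp only [Arr.aprod, CArr.toArr]
      have hdm : degM (FreeMagma.mul x y) = degM x + degM y := rfl
      by_cases hk : (k : ℕ) + 1 < d
      · rw [dif_pos hk, dif_pos hk]
        simp only [ihx, ihy]
        rw [sum_aux, sum_aux]
        simp only [Fin.val_mk]
        by_cases hj : (j : ℕ) = (i : ℕ) + (degM x + degM y)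
        · have hjd := j.isLt
          rw [dif_pos (show (i : ℕ) + degM x ≤ d by omega),
            dif_pos (show (i : ℕ) + degM y ≤ d by omega),
            if_pos (show (j : ℕ) = (i : ℕ) + degM x + degM y by omega),
            if_pos (show (j : ℕ) = (i : ℕ) + degM y + degM x by omega),
            if_pos (show (j : ℕ) = (i : ℕ) + degM (FreeMagma.mul x y) by rw [hdm]; omega),
            S_mul]
        · rw [if_neg (show ¬(j : ℕ) = (i : ℕ) + degM (FreeMagma.mul x y) by rw [hdm]; omega)]
          split_ifs <;> first | (exfalso; omega) | simp
      · rw [dif_neg hk, dif_neg hk]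
        have hz : ((variants (FreeMagma.mul x y)).map (monProd F d (i : ℕ) (k : ℕ))).sum
            = 0 := by
          have hzz : ∀ (k1 : ℕ) (m' : FreeMagma (Fin n)),
              ((variants m').map (monProd F d k1 ((k : ℕ) + 1))).sum = 0 := fun k1 m' =>
            S_zero _ _ (by omega) m'
          rw [S_mul, hzz, hzz, hzz, hzz, zero_mul, add_zero]
        rw [hz]
        simp

/-- The `(i,j,k)` entry as an additive monoid homomorphism. -/
def entryHom {R : Type*} [CommRing R] (i j : Fin (d + 1)) (k : Fin d) :
    CArr d R →+ R where
  toFun a := a i j k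
  map_zero' := rfl
  map_add' _ _ := rfl

lemma sum_entry {R : Type*} [CommRing R] {ι : Type*} (s : Finset ι) (g : ι → CArr d R)
    (i j : Fin (d + 1)) (k : Fin d) :
    (∑ m ∈ s, g m) i j k = ∑ m ∈ s, g m i j k :=
  map_sum (entryHom i j k) g s

end Aux

/-- consequence of Claim 3.7.  Let `F` be a field, `n, d ≥ 1`, let `f` be an
element of the free nonunital nonassociative noncommutative algebra `F_{Ā,C̄}[X]` of degree
`≤ d`, and let `1 ≤ d' ≤ d`.  Then the `(1, d'+1, 1)` entry (1-based; zero-based `(0, d', 0)`)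
of the evaluation `Φ(f) ∈ C'_d(R)` of `f` at `(Z_1, …, Z_n)` under the anticommutator product
`⊙` equals `∑_m c_m · ψ(m)`, the sum running over all monomials `m` of degree exactly `d'`,
where `c_m` is the coefficient of `m` in `f` and
`ψ(m) = ∑_ε ∏_{t=1}^{d'} z_{σ_{m_ε}(t), t, l^{m_ε}_t}` (the inner sum over all choices `ε` of
a Boolean for each internal node of `m`). -/
theorem entry_of_anticommutator_eval_free_at_Z {F : Type*} [Field F] (n d : ℕ)
    (hn : 1 ≤ n) (hd : 1 ≤ d)
    (f : FreeNonUnitalNonAssocAlgebra F (Fin n))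
    (hdeg : ∀ m ∈ (coeffOf f).support, degM m ≤ d)
    (d' : ℕ) (hd'1 : 1 ≤ d') (hd'2 : d' ≤ d) :
    evalNA (ZC F n d) f ⟨0, by omega⟩ ⟨d', by omega⟩ ⟨0, by omega⟩
      = ∑ m ∈ (coeffOf f).support.filter (fun m => degM m = d'),
          MvPolynomial.C (coeffOf f m) * psi F d m := by
  classical
  have key : ∀ m : FreeMagma (Fin n),
      evalWith (· * ·) (ZC F n d) m ⟨0, by omega⟩ ⟨d', by omega⟩ ⟨0, by omega⟩
        = if degM m = d' then psi F d m else 0 := by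
    intro m
    rw [eval_entry]
    show (if d' = 0 + degM m then ((variants m).map (monProd F d 0 0)).sum else 0) = _
    by_cases h : degM m = d'
    · rw [if_pos (by omega), if_pos h]
      rfl
    · rw [if_neg (by omega), if_neg h]
  show (Finsupp.sum (coeffOf f) fun m c => c • evalWith (· * ·) (ZC F n d) m)
      ⟨0, by omega⟩ ⟨d', by omega⟩ ⟨0, by omega⟩ = _
  rw [Finsupp.sum, sum_entry, Finset.sum_filter]
  refine Finset.sum_congr rfl fun m hm => ?_
  have hsmul : (coeffOf f m • evalWith (· * ·) (ZC F n d) m)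
        (⟨0, by omega⟩ : Fin (d + 1)) ⟨d', by omega⟩ ⟨0, by omega⟩
      = coeffOf f m •
          evalWith (· * ·) (ZC F n d) m ⟨0, by omega⟩ ⟨d', by omega⟩ ⟨0, by omega⟩ := rfl
  rw [hsmul, key m]
  split_ifs with h
  · rw [MvPolynomial.smul_eq_C_mul]
  · rw [smul_zero]


end NAPIT
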